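/- arXiv:cs/0005001 — 2 statements merged into one kernel-verified Lean document; each statement's English description precedes it below -/
import Mathlib

section
/- Let v and v' be votings of the nation such that under v, candidate A receives strictly more votes than B in every one of the K regions. Suppose every cell where v' differs from v lies in the union of B_blk pairwise disjoint m_n × m_n noise-concentrated blocks contained in the nation, and set S_c = B_blk·m_n². If S_c < (m_n²/m_r²) · (1/(⌈m_n/m_r⌉ + 1)²) · (N/2), then under v' candidate A wins strictly more than half of the K regions, i.e. regional voting still selects A. -/
/-- The nation: the set of cells `{0,…,L−1} × {0,…,M−1} ⊆ ℤ²`. -/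
noncomputable def nation (L M : ℤ) : Finset (ℤ × ℤ) :=
  Finset.Ico 0 L ×ˢ Finset.Ico 0 M

/-- The region index of a cell `(x, y)` for the (unshifted) partition into `m × m` squares:
`(⌊x/m⌋, ⌊y/m⌋)`. -/
def regionIdx (m : ℤ) (p : ℤ × ℤ) : ℤ × ℤ :=
  (p.1.fdiv m, p.2.fdiv m)

/-- The `mn × mn` noise-concentrated block at position `(u, v)`. -/
noncomputable def noiseBlock (mn u v : ℤ) : Finset (ℤ × ℤ) :=
  Finset.Ico u (u + mn) ×ˢ Finset.Ico v (v + mn)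

/-- The number of votes that candidate `c` (`true` = A, `false` = B) receives in the region
with index `r` under voting `v`. -/
noncomputable def votesIn (L M mr : ℤ) (v : ℤ × ℤ → Bool) (r : ℤ × ℤ) (c : Bool) : ℕ :=
  ((nation L M).filter (fun p => regionIdx mr p = r ∧ v p = c)).card

lemma ediv_add_le (m x y : ℤ) (hm : 0 < m) : (x + y) / m ≤ x / m + y / m + 1 := by
  have hx := Int.lt_ediv_add_one_mul_self x hm
  have hy := Int.lt_ediv_add_one_mul_self y hm
  have : (x + y) / m < x / m + y / m + 2 := by
    rw [Int.ediv_lt_iff_lt_mul hm]; nlinarith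
  omega

lemma fdivImageCard (m n a : ℤ) (hm : 1 ≤ m) (hn : 1 ≤ n) :
    (((Finset.Ico a (a + n)).image (fun x => x.fdiv m)).card : ℤ) ≤ ⌈(n : ℚ) / (m : ℚ)⌉ + 1 := by
  set C : ℤ := ⌈(n : ℚ) / (m : ℚ)⌉ with hC
  have hm0 : (0 : ℤ) < m := by omega
  have hsub : (Finset.Ico a (a + n)).image (fun x => x.fdiv m) ⊆
      Finset.Icc (a.fdiv m) ((a + n - 1).fdiv m) := by
    intro k hk
    simp only [Finset.mem_image, Finset.mem_Ico] at hk
    obtain ⟨x, ⟨hx1, hx2⟩, rfl⟩ := hk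
    rw [Finset.mem_Icc, Int.fdiv_eq_ediv_of_nonneg _ hm0.le, Int.fdiv_eq_ediv_of_nonneg _ hm0.le,
      Int.fdiv_eq_ediv_of_nonneg _ hm0.le]
    exact ⟨Int.ediv_le_ediv hm0 hx1, Int.ediv_le_ediv hm0 (by omega)⟩
  have hcard := Finset.card_le_card hsub
  rw [Int.card_Icc] at hcard
  have hCm : n ≤ C * m := by
    have h1 : (n : ℚ) / m ≤ (C : ℚ) := Int.le_ceil _
    have hmq : (0 : ℚ) < (m : ℚ) := by exact_mod_cast hm0
    have := (div_le_iff₀ hmq).mp h1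
    exact_mod_cast this
  have hstep : (a + n - 1).fdiv m ≤ a.fdiv m + C := by
    rw [Int.fdiv_eq_ediv_of_nonneg _ hm0.le, Int.fdiv_eq_ediv_of_nonneg _ hm0.le]
    have h1 : (a + (n - 1)) / m ≤ a / m + (n - 1) / m + 1 := ediv_add_le m a (n - 1) hm0
    have h2 : (n - 1) / m < C := by rw [Int.ediv_lt_iff_lt_mul hm0]; omega
    have h3 : a + n - 1 = a + (n - 1) := by ring
    rw [h3]; omega
  have htn : ((a + n - 1).fdiv m + 1 - a.fdiv m).toNat ≤ (C + 1).toNat := by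
    apply Int.toNat_le_toNat; omega
  have h3 : (((Finset.Ico a (a + n)).image (fun x => x.fdiv m)).card : ℤ) ≤ ((C + 1).toNat : ℤ) := by
    exact_mod_cast le_trans hcard htn
  have hC1 : 0 ≤ C + 1 := by nlinarith
  rwa [Int.toNat_of_nonneg hC1] at h3

lemma ceil_pos' (m n : ℤ) (hm : 1 ≤ m) (hn : 1 ≤ n) : 1 ≤ ⌈(n : ℚ) / (m : ℚ)⌉ := by
  have h4 : (0:ℚ) < (n:ℚ)/(m:ℚ) := by
    have : (0:ℚ) < (m:ℚ) := by exact_mod_cast (show (0:ℤ) < m by omega)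
    have : (0:ℚ) < (n:ℚ) := by exact_mod_cast (show (0:ℤ) < n by omega)
    positivity
  exact Int.ceil_pos.mpr h4

lemma regionIdx_image_product (m : ℤ) (s t : Finset ℤ) :
    (s ×ˢ t).image (regionIdx m) = (s.image (fun x => x.fdiv m)) ×ˢ (t.image (fun x => x.fdiv m)) := by
  ext ⟨i, j⟩
  simp only [Finset.mem_image, Finset.mem_product, regionIdx, Prod.ext_iff, Prod.exists]
  constructor
  · rintro ⟨x, y, ⟨hx, hy⟩, h1, h2⟩
    exact ⟨⟨x, hx, h1⟩, ⟨y, hy, h2⟩⟩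
  · rintro ⟨⟨x, hx, h1⟩, ⟨y, hy, h2⟩⟩
    exact ⟨x, y, ⟨hx, hy⟩, h1, h2⟩

lemma fdiv_image_Ico (mr L : ℤ) (hmr : 1 ≤ mr) (hdL : mr ∣ L) :
    (Finset.Ico 0 L).image (fun x => x.fdiv mr) = Finset.Ico 0 (L / mr) := by
  have hm0 : (0 : ℤ) < mr := by omega
  ext k
  simp only [Finset.mem_image, Finset.mem_Ico]
  constructor
  · rintro ⟨x, ⟨hx1, hx2⟩, rfl⟩
    rw [Int.fdiv_eq_ediv_of_nonneg _ hm0.le]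
    exact ⟨Int.ediv_nonneg hx1 hm0.le, by
      rw [Int.ediv_lt_iff_lt_mul hm0, Int.ediv_mul_cancel hdL]; exact hx2⟩
  · rintro ⟨hk1, hk2⟩
    refine ⟨k * mr, ⟨by positivity, ?_⟩, ?_⟩
    · calc k * mr < (L / mr) * mr := mul_lt_mul_of_pos_right hk2 hm0
        _ = L := Int.ediv_mul_cancel hdL
    · rw [Int.fdiv_eq_ediv_of_nonneg _ hm0.le, Int.mul_ediv_cancel _ (by omega)]

/-- Theorem 1, item 2: if A wins every region under `v`, and all the cells where `v'` differs
from `v` lie in a union of pairwise disjoint `m_n × m_n` noise-concentrated blocks of total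
size `S_c < (m_n²/m_r²) · (1/(⌈m_n/m_r⌉+1)²) · N/2`, then under `v'` candidate A still wins
strictly more than half of the `K` regions. -/
theorem regional_voting_retains_A (L M mr mn : ℤ)
    (hL : 0 < L) (hM : 0 < M) (hmr : 1 ≤ mr) (hmn : 1 ≤ mn)
    (hdL : mr ∣ L) (hdM : mr ∣ M)
    (v v' : ℤ × ℤ → Bool)
    (hAwins : ∀ r ∈ (nation L M).image (regionIdx mr),
      votesIn L M mr v r false < votesIn L M mr v r true)
    (Bblk : ℕ) (pos : Fin Bblk → ℤ × ℤ)
    (hdisj : ∀ i j : Fin Bblk, i ≠ j →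
      Disjoint (noiseBlock mn (pos i).1 (pos i).2) (noiseBlock mn (pos j).1 (pos j).2))
    (hsub : ∀ i : Fin Bblk, noiseBlock mn (pos i).1 (pos i).2 ⊆ nation L M)
    (hdiff : ∀ p, v' p ≠ v p →
      p ∈ Finset.univ.biUnion (fun i : Fin Bblk => noiseBlock mn (pos i).1 (pos i).2))
    (Sc : ℤ) (hSc : Sc = (Bblk : ℤ) * mn ^ 2)
    (hnoise : (Sc : ℚ) < ((mn : ℚ) ^ 2 / (mr : ℚ) ^ 2) *
      (1 / ((⌈(mn : ℚ) / (mr : ℚ)⌉ : ℚ) + 1) ^ 2) * (((L : ℚ) * (M : ℚ)) / 2)) :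
    ((nation L M).image (regionIdx mr)).card <
      2 * (((nation L M).image (regionIdx mr)).filter
        (fun r => votesIn L M mr v' r false < votesIn L M mr v' r true)).card := by
  have hm0 : (0 : ℤ) < mr := by omega
  set C : ℤ := ⌈(mn : ℚ) / (mr : ℚ)⌉ with hCdef
  have hC1 : 1 ≤ C := ceil_pos' mr mn hmr hmn
  set I := (nation L M).image (regionIdx mr) with hI
  set T : Finset (ℤ × ℤ) := Finset.univ.biUnion
    (fun i : Fin Bblk => (noiseBlock mn (pos i).1 (pos i).2).image (regionIdx mr)) with hT
  set G := I.filter (fun r => votesIn L M mr v' r false < votesIn L M mr v' r true) with hG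
  -- step 1: regions outside T are unchanged
  have hsame : ∀ r ∈ I, r ∉ T → ∀ c, votesIn L M mr v' r c = votesIn L M mr v r c := by
    intro r hr hrT c
    unfold votesIn
    congr 1
    apply Finset.filter_congr
    intro p hp
    by_cases hv : v' p = v p
    · rw [hv]
    · constructor
      · rintro ⟨hreg, -⟩
        exfalso
        apply hrT
        obtain ⟨i, -, hpi⟩ := Finset.mem_biUnion.mp (hdiff p hv)
        rw [hT]
        exact Finset.mem_biUnion.mpr ⟨i, Finset.mem_univ i,
          Finset.mem_image.mpr ⟨p, hpi, hreg⟩⟩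
      · rintro ⟨hreg, -⟩
        exfalso
        apply hrT
        obtain ⟨i, -, hpi⟩ := Finset.mem_biUnion.mp (hdiff p hv)
        rw [hT]
        exact Finset.mem_biUnion.mpr ⟨i, Finset.mem_univ i,
          Finset.mem_image.mpr ⟨p, hpi, hreg⟩⟩
  have hsubG : I \ T ⊆ G := by
    intro r hr
    rw [Finset.mem_sdiff] at hr
    rw [hG, Finset.mem_filter]
    refine ⟨hr.1, ?_⟩
    rw [hsame r hr.1 hr.2 false, hsame r hr.1 hr.2 true]
    exact hAwins r hr.1
  -- step 2: card of T
  have hTcard : (T.card : ℤ) ≤ (Bblk : ℤ) * (C + 1) ^ 2 := by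
    have h1 : T.card ≤ ∑ i : Fin Bblk,
        ((noiseBlock mn (pos i).1 (pos i).2).image (regionIdx mr)).card :=
      Finset.card_biUnion_le
    have h2 : ∀ i : Fin Bblk,
        (((noiseBlock mn (pos i).1 (pos i).2).image (regionIdx mr)).card : ℤ) ≤ (C + 1) ^ 2 := by
      intro i
      rw [noiseBlock, regionIdx_image_product, Finset.card_product]
      have b1 := fdivImageCard mr mn (pos i).1 hmr hmn
      have b2 := fdivImageCard mr mn (pos i).2 hmr hmn
      push_cast
      have c1 : (0:ℤ) ≤ (((Finset.Ico (pos i).1 ((pos i).1 + mn)).image (fun x => x.fdiv mr)).card : ℤ) := Int.natCast_nonneg _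
      have c2 : (0:ℤ) ≤ (((Finset.Ico (pos i).2 ((pos i).2 + mn)).image (fun x => x.fdiv mr)).card : ℤ) := Int.natCast_nonneg _
      nlinarith [b1, b2, c1, c2]
    calc (T.card : ℤ) ≤ ∑ i : Fin Bblk,
          (((noiseBlock mn (pos i).1 (pos i).2).image (regionIdx mr)).card : ℤ) := by
            exact_mod_cast h1
      _ ≤ ∑ _i : Fin Bblk, (C + 1) ^ 2 := Finset.sum_le_sum (fun i _ => h2 i)
      _ = (Bblk : ℤ) * (C + 1) ^ 2 := by simp [mul_comm]
  -- step 3: card of I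
  have hIcard : (I.card : ℤ) = (L / mr) * (M / mr) := by
    rw [hI, nation, regionIdx_image_product, fdiv_image_Ico mr L hmr hdL,
      fdiv_image_Ico mr M hmr hdM, Finset.card_product, Int.card_Ico, Int.card_Ico]
    have h1 : 0 ≤ L / mr := Int.ediv_nonneg hL.le hm0.le
    have h2 : 0 ≤ M / mr := Int.ediv_nonneg hM.le hm0.le
    push_cast
    rw [Int.toNat_of_nonneg (by omega), Int.toNat_of_nonneg (by omega)]
    ring
  -- step 4: arithmetic from hnoise
  have hKbound : 2 * (Bblk : ℤ) * (C + 1) ^ 2 < (L / mr) * (M / mr) := by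
    have hmrq : (0 : ℚ) < (mr : ℚ) := by exact_mod_cast hm0
    have hmnq : (0 : ℚ) < (mn : ℚ) := by exact_mod_cast (show (0:ℤ) < mn by omega)
    have hCq : (0 : ℚ) < (C : ℚ) + 1 := by
      have : (1:ℚ) ≤ (C:ℚ) := by exact_mod_cast hC1
      linarith
    rw [hSc] at hnoise
    push_cast at hnoise
    have key : 2 * (Bblk : ℚ) * ((C : ℚ) + 1) ^ 2 * (mr : ℚ) ^ 2 < (L : ℚ) * (M : ℚ) := by
      have hpos : (0:ℚ) < (mr:ℚ)^2 * ((C:ℚ)+1)^2 * 2 := by positivity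
      have e : (mn:ℚ)^2 / (mr:ℚ)^2 * (1/((C:ℚ)+1)^2) * ((L:ℚ)*(M:ℚ)/2)
          = ((mn:ℚ)^2 * ((L:ℚ)*(M:ℚ))) / ((mr:ℚ)^2 * ((C:ℚ)+1)^2 * 2) := by
        field_simp
      rw [e] at hnoise
      have h4 := (lt_div_iff₀ hpos).mp hnoise
      have hk : (0:ℚ) < (mn:ℚ)^2 := by positivity
      have h5 : (2*(Bblk:ℚ)*((C:ℚ)+1)^2*(mr:ℚ)^2) * (mn:ℚ)^2
          < ((L:ℚ)*(M:ℚ)) * (mn:ℚ)^2 := by linear_combination h4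
      exact lt_of_mul_lt_mul_right h5 hk.le
    obtain ⟨a, ha⟩ := hdL
    obtain ⟨b, hb⟩ := hdM
    have hLa : L / mr = a := by rw [ha]; exact Int.mul_ediv_cancel_left a (by omega)
    have hMb : M / mr = b := by rw [hb]; exact Int.mul_ediv_cancel_left b (by omega)
    rw [hLa, hMb]
    have keyZ : 2 * (Bblk : ℤ) * (C + 1) ^ 2 * mr ^ 2 < L * M := by exact_mod_cast key
    rw [ha, hb] at keyZ
    nlinarith [sq_nonneg mr]
  -- step 5: combine
  have h1 : I.card ≤ (I \ T).card + T.card := by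
    calc I.card ≤ ((I \ T) ∪ T).card := Finset.card_le_card (by
          intro x hx
          rw [Finset.mem_union, Finset.mem_sdiff]
          by_cases h : x ∈ T
          · exact Or.inr h
          · exact Or.inl ⟨hx, h⟩)
      _ ≤ (I \ T).card + T.card := Finset.card_union_le _ _
  have h2 : (I \ T).card ≤ G.card := Finset.card_le_card hsubG
  have h3 : 2 * T.card < I.card := by
    have : (2 * T.card : ℤ) < (I.card : ℤ) := by
      rw [hIcard]
      calc (2 * T.card : ℤ) ≤ 2 * ((Bblk : ℤ) * (C + 1) ^ 2) := by omega
        _ = 2 * (Bblk : ℤ) * (C + 1) ^ 2 := by ring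
        _ < (L / mr) * (M / mr) := hKbound
    exact_mod_cast this
  omega
end

section
/- Let v and v' be votings of the nation such that under v, candidate A receives strictly more votes than B in every one of the K regions. Suppose v' is obtained from v by changing to B the vote of exactly the cells voting A inside the union of B_blk pairwise disjoint m_n × m_n noise-concentrated blocks contained in the nation, and suppose the fraction of cells voting A under v inside this union equals the national fraction α = (number of cells voting A under v)/N. If the number t of changed votes satisfies t < (m_n²/m_r²) · (1/(⌈m_n/m_r⌉ + 1)²) · (α/2) · N, then under v' candidate A wins strictly more than half of the K regions, i.e. regional voting still selects A. -/
/-- Existence form: `[0, mr*l)` maps onto `[0, l)` under floor-division by `mr`. -/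
lemma exists_fdiv_iff (mr l q : ℤ) (hmr : 0 < mr) :
    (∃ x, (0 ≤ x ∧ x < mr * l) ∧ x.fdiv mr = q) ↔ (0 ≤ q ∧ q < l) := by
  constructor
  · rintro ⟨x, ⟨hx0, hxl⟩, rfl⟩
    rw [Int.fdiv_eq_ediv_of_nonneg _ hmr.le]
    refine ⟨Int.ediv_nonneg hx0 hmr.le, ?_⟩
    rw [Int.ediv_lt_iff_lt_mul hmr]
    linarith [hxl]
  · rintro ⟨hq0, hql⟩
    refine ⟨q * mr, ⟨by positivity, by nlinarith⟩, ?_⟩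
    rw [Int.fdiv_eq_ediv_of_nonneg _ hmr.le, Int.mul_ediv_cancel _ hmr.ne']

/-- The region-image of one block is small. -/
lemma block_image_card (mr mn c u w : ℤ) (hmr : 0 < mr) (hc : mn ≤ c * mr) :
    ((noiseBlock mn u w).image (regionIdx mr)).card ≤ ((c+1).toNat)^2 := by
  have hkey : ∀ x y : ℤ, x ≤ y → y < x + mn →
      x.fdiv mr ≤ y.fdiv mr ∧ y.fdiv mr < x.fdiv mr + (c+1) := by
    intro x y hxy hym
    rw [Int.fdiv_eq_ediv_of_nonneg _ hmr.le, Int.fdiv_eq_ediv_of_nonneg _ hmr.le]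
    constructor
    · exact Int.ediv_le_ediv hmr hxy
    · have h1 : y ≤ x + c * mr := by linarith
      have h2 : y / mr ≤ (x + c * mr) / mr := Int.ediv_le_ediv hmr h1
      rw [Int.add_mul_ediv_right _ _ hmr.ne'] at h2
      linarith
  have hsub : (noiseBlock mn u w).image (regionIdx mr) ⊆
      Finset.Ico (u.fdiv mr) (u.fdiv mr + (c+1)) ×ˢ Finset.Ico (w.fdiv mr) (w.fdiv mr + (c+1)) := by
    intro r hr
    rw [Finset.mem_image] at hr
    obtain ⟨p, hp, rfl⟩ := hr
    simp only [noiseBlock, Finset.mem_product, Finset.mem_Ico] at hp ⊢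
    obtain ⟨⟨h1, h2⟩, h3, h4⟩ := hp
    exact ⟨hkey u p.1 h1 h2, hkey w p.2 h3 h4⟩
  calc ((noiseBlock mn u w).image (regionIdx mr)).card
      ≤ _ := Finset.card_le_card hsub
    _ = ((c+1).toNat)^2 := by
        rw [Finset.card_product, Int.card_Ico, Int.card_Ico]
        have h1 : u.fdiv mr + (c + 1) - u.fdiv mr = c + 1 := by ring
        have h2 : w.fdiv mr + (c + 1) - w.fdiv mr = c + 1 := by ring
        rw [h1, h2, sq]

set_option maxHeartbeats 1000000 in
/-- Corollary 1: suppose A wins every region under `v`, `v'` is obtained from `v` by switching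
to B exactly the A-votes inside a union `U` of pairwise disjoint `m_n × m_n` blocks contained
in the nation, and the fraction of A-voters inside `U` equals the national fraction
`α = a/N`.  If the number `t` of changed votes satisfies
`t < (m_n²/m_r²) · (1/(⌈m_n/m_r⌉+1)²) · (α/2) · N`, then under `v'` candidate A still wins
strictly more than half of the `K` regions. -/
theorem regional_voting_accommodates_noise (L M mr mn : ℤ)
    (hL : 0 < L) (hM : 0 < M) (hmr : 1 ≤ mr) (hmn : 1 ≤ mn)
    (hdL : mr ∣ L) (hdM : mr ∣ M)
    (v v' : ℤ × ℤ → Bool)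
    (hAwins : ∀ r ∈ (nation L M).image (regionIdx mr),
      votesIn L M mr v r false < votesIn L M mr v r true)
    (Bblk : ℕ) (pos : Fin Bblk → ℤ × ℤ)
    (hdisj : ∀ i j : Fin Bblk, i ≠ j →
      Disjoint (noiseBlock mn (pos i).1 (pos i).2) (noiseBlock mn (pos j).1 (pos j).2))
    (hsub : ∀ i : Fin Bblk, noiseBlock mn (pos i).1 (pos i).2 ⊆ nation L M)
    (U : Finset (ℤ × ℤ))
    (hU : U = Finset.univ.biUnion (fun i : Fin Bblk => noiseBlock mn (pos i).1 (pos i).2))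
    (hchange : ∀ p, v' p = if p ∈ U ∧ v p = true then false else v p)
    (a : ℕ) (ha : a = ((nation L M).filter (fun p => v p = true)).card)
    (α : ℚ) (hα : α = (a : ℚ) / ((L : ℚ) * (M : ℚ)))
    (hfrac : ((U.filter (fun p => v p = true)).card : ℚ) = α * (U.card : ℚ))
    (t : ℕ) (ht : t = (U.filter (fun p => v p = true)).card)
    (hnoise : (t : ℚ) < ((mn : ℚ) ^ 2 / (mr : ℚ) ^ 2) *
      (1 / ((⌈(mn : ℚ) / (mr : ℚ)⌉ : ℚ) + 1) ^ 2) * (α / 2) * ((L : ℚ) * (M : ℚ))) :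
    ((nation L M).image (regionIdx mr)).card <
      2 * (((nation L M).image (regionIdx mr)).filter
        (fun r => votesIn L M mr v' r false < votesIn L M mr v' r true)).card := by
  obtain ⟨l, hLl⟩ := hdL
  obtain ⟨m, hMm⟩ := hdM
  have hmr0 : (0:ℤ) < mr := by omega
  have hmn0 : (0:ℤ) < mn := by omega
  have hl0 : 0 < l := by nlinarith
  have hm0 : 0 < m := by nlinarith
  set c : ℤ := ⌈(mn : ℚ) / (mr : ℚ)⌉ with hc
  have hmrq : (0:ℚ) < (mr:ℚ) := by exact_mod_cast hmr0
  have hmnq : (0:ℚ) < (mn:ℚ) := by exact_mod_cast hmn0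
  have hc1 : 1 ≤ c := by
    have : 0 < c := Int.ceil_pos.mpr (by positivity)
    omega
  have hcq1 : (1:ℚ) ≤ (c:ℚ) := by exact_mod_cast hc1
  have hcmr : mn ≤ c * mr := by
    have h1 : (mn:ℚ) / (mr:ℚ) ≤ (c:ℚ) := Int.le_ceil _
    have h2 : (mn:ℚ) ≤ (c:ℚ) * (mr:ℚ) := by
      rw [div_le_iff₀ hmrq] at h1; exact h1
    exact_mod_cast h2
  -- useful casts
  have hmnt : ((mn.toNat : ℕ) : ℚ) = (mn : ℚ) := by exact_mod_cast Int.toNat_of_nonneg hmn0.le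
  have hct : (((c+1).toNat : ℕ) : ℚ) = (c : ℚ) + 1 := by
    exact_mod_cast Int.toNat_of_nonneg (by omega : (0:ℤ) ≤ c + 1)
  -- the set of regions
  have himg : (nation L M).image (regionIdx mr) = Finset.Ico 0 l ×ˢ Finset.Ico 0 m := by
    ext ⟨qx, qy⟩
    simp only [nation, hLl, hMm, Finset.mem_image, Finset.mem_product, Finset.mem_Ico,
      regionIdx, Prod.mk.injEq, Prod.exists]
    constructor
    · rintro ⟨x, y, ⟨hx, hy⟩, h1, h2⟩
      exact ⟨(exists_fdiv_iff mr l qx hmr0).mp ⟨x, hx, h1⟩,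
        (exists_fdiv_iff mr m qy hmr0).mp ⟨y, hy, h2⟩⟩
    · rintro ⟨h1, h2⟩
      obtain ⟨x, hx, hx'⟩ := (exists_fdiv_iff mr l qx hmr0).mpr h1
      obtain ⟨y, hy, hy'⟩ := (exists_fdiv_iff mr m qy hmr0).mpr h2
      exact ⟨x, y, ⟨hx, hy⟩, hx', hy'⟩
  set K := ((nation L M).image (regionIdx mr)).card with hKdef
  have hKq : (K:ℚ) = (l:ℚ) * (m:ℚ) := by
    have h1 : (K : ℤ) = l * m := by
      rw [hKdef, himg, Finset.card_product, Int.card_Ico, Int.card_Ico]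
      simp only [sub_zero]
      push_cast
      rw [Int.toNat_of_nonneg hl0.le, Int.toNat_of_nonneg hm0.le]
    exact_mod_cast h1
  -- U ⊆ nation
  have hUnat : U ⊆ nation L M := by
    rw [hU]; exact Finset.biUnion_subset.mpr (fun i _ => hsub i)
  -- card of U
  have hUcard : U.card = Bblk * (mn.toNat)^2 := by
    rw [hU, Finset.card_biUnion (fun i _ j _ hij => hdisj i j hij)]
    have hbc : ∀ i : Fin Bblk, (noiseBlock mn (pos i).1 (pos i).2).card = mn.toNat ^ 2 := by
      intro i
      rw [noiseBlock, Finset.card_product, Int.card_Ico, Int.card_Ico]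
      have h1 : (pos i).1 + mn - (pos i).1 = mn := by ring
      have h2 : (pos i).2 + mn - (pos i).2 = mn := by ring
      rw [h1, h2, sq]
    rw [Finset.sum_congr rfl (fun i _ => hbc i), Finset.sum_const, Finset.card_univ,
      Fintype.card_fin, smul_eq_mul]
  -- touched regions
  set T : Finset (ℤ × ℤ) := U.image (regionIdx mr) with hTdef
  have hTsub : T ⊆ (nation L M).image (regionIdx mr) := Finset.image_subset_image hUnat
  have hTbound : T.card ≤ Bblk * ((c+1).toNat)^2 := by
    have hsub2 : T ⊆ Finset.univ.biUnion
        (fun i : Fin Bblk => (noiseBlock mn (pos i).1 (pos i).2).image (regionIdx mr)) := by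
      intro r hr
      rw [hTdef, Finset.mem_image] at hr
      obtain ⟨p, hp, rfl⟩ := hr
      rw [hU, Finset.mem_biUnion] at hp
      obtain ⟨i, _, hpi⟩ := hp
      exact Finset.mem_biUnion.mpr ⟨i, Finset.mem_univ i, Finset.mem_image_of_mem _ hpi⟩
    calc T.card ≤ _ := Finset.card_le_card hsub2
      _ ≤ ∑ i : Fin Bblk, ((noiseBlock mn (pos i).1 (pos i).2).image (regionIdx mr)).card :=
          Finset.card_biUnion_le
      _ ≤ ∑ _i : Fin Bblk, ((c+1).toNat)^2 :=
          Finset.sum_le_sum (fun i _ => block_image_card mr mn c _ _ hmr0 hcmr)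
      _ = Bblk * ((c+1).toNat)^2 := by
          rw [Finset.sum_const, Finset.card_univ, Fintype.card_fin, smul_eq_mul]
  -- rational arithmetic
  have hLM : (L:ℚ) * (M:ℚ) = (mr:ℚ)^2 * ((l:ℚ) * (m:ℚ)) := by
    rw [hLl, hMm]; push_cast; ring
  have hα0 : 0 < α := by
    rcases lt_or_ge 0 α with h | h
    · exact h
    · exfalso
      have hP : (0:ℚ) ≤ (mn:ℚ)^2/(mr:ℚ)^2 * (1/((c:ℚ)+1)^2) := by positivity
      have hQ : (0:ℚ) < (L:ℚ) * (M:ℚ) := by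
        have h1 : (0:ℚ) < (L:ℚ) := by exact_mod_cast hL
        have h2 : (0:ℚ) < (M:ℚ) := by exact_mod_cast hM
        positivity
      have ht0 : (0:ℚ) ≤ (t:ℚ) := Nat.cast_nonneg t
      have h5 : (0:ℚ) ≤ ((mn:ℚ)^2/(mr:ℚ)^2 * (1/((c:ℚ)+1)^2)) * (-(α/2)) :=
        mul_nonneg hP (by linarith)
      have h6 : (0:ℚ) ≤ (((mn:ℚ)^2/(mr:ℚ)^2 * (1/((c:ℚ)+1)^2)) * (-(α/2))) * ((L:ℚ)*(M:ℚ)) :=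
        mul_nonneg h5 hQ.le
      nlinarith [hnoise]
  have htq : (t:ℚ) = α * ((Bblk:ℚ) * (mn:ℚ)^2) := by
    rw [ht, hfrac, hUcard]
    push_cast
    rw [hmnt]
    try ring
  have hcq : (0:ℚ) < (c:ℚ) + 1 := by linarith
  have h2 : α * ((Bblk:ℚ) * (mn:ℚ)^2) * (2*((c:ℚ)+1)^2) < (mn:ℚ)^2 * α * ((l:ℚ)*(m:ℚ)) := by
    have hrhs : ((mn : ℚ) ^ 2 / (mr : ℚ) ^ 2) * (1 / ((c:ℚ) + 1) ^ 2) * (α / 2) * ((L : ℚ) * (M : ℚ))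
        = (mn:ℚ)^2 * α * ((l:ℚ)*(m:ℚ)) / (2*((c:ℚ)+1)^2) := by
      rw [hLM]; field_simp
    have h := hnoise
    rw [htq, hrhs, lt_div_iff₀ (by positivity)] at h
    exact h
  have hpos : (0:ℚ) < α * (mn:ℚ)^2 := by positivity
  have h3 : (α * (mn:ℚ)^2) * ((Bblk:ℚ) * ((c:ℚ)+1)^2 * 2) <
      (α * (mn:ℚ)^2) * ((l:ℚ)*(m:ℚ)) := by
    calc (α * (mn:ℚ)^2) * ((Bblk:ℚ) * ((c:ℚ)+1)^2 * 2)
        = α * ((Bblk:ℚ) * (mn:ℚ)^2) * (2*((c:ℚ)+1)^2) := by ring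
      _ < (mn:ℚ)^2 * α * ((l:ℚ)*(m:ℚ)) := h2
      _ = (α * (mn:ℚ)^2) * ((l:ℚ)*(m:ℚ)) := by ring
  have key : (Bblk:ℚ) * ((c:ℚ)+1)^2 * 2 < (l:ℚ) * (m:ℚ) :=
    lt_of_mul_lt_mul_left h3 hpos.le
  have hTK : 2 * T.card < K := by
    have hTq : (T.card : ℚ) ≤ (Bblk:ℚ) * ((c:ℚ)+1)^2 := by
      have h1 : (T.card : ℚ) ≤ ((Bblk * ((c+1).toNat)^2 : ℕ) : ℚ) := by exact_mod_cast hTbound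
      calc (T.card : ℚ) ≤ _ := h1
        _ = (Bblk:ℚ) * ((c:ℚ)+1)^2 := by push_cast; rw [hct]
    have hfin : (2 * T.card : ℚ) < (K : ℚ) := by
      rw [hKq]
      push_cast
      linarith
    exact_mod_cast hfin
  -- untouched regions still win
  have hgood : ((nation L M).image (regionIdx mr)) \ T ⊆
      ((nation L M).image (regionIdx mr)).filter
        (fun r => votesIn L M mr v' r false < votesIn L M mr v' r true) := by
    intro r hr
    rw [Finset.mem_sdiff] at hr
    obtain ⟨hrI, hrT⟩ := hr
    have hveq : ∀ b : Bool, votesIn L M mr v' r b = votesIn L M mr v r b := by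
      intro b
      unfold votesIn
      congr 1
      apply Finset.filter_congr
      intro p _
      have hpv : regionIdx mr p = r → v' p = v p := by
        intro h
        rw [hchange p, if_neg]
        rintro ⟨hpU, -⟩
        exact hrT (by rw [hTdef]; exact Finset.mem_image.mpr ⟨p, hpU, h⟩)
      constructor
      · rintro ⟨h1, h2⟩; exact ⟨h1, (hpv h1).symm.trans h2⟩
      · rintro ⟨h1, h2⟩; exact ⟨h1, (hpv h1).trans h2⟩
    rw [Finset.mem_filter]
    exact ⟨hrI, by rw [hveq, hveq]; exact hAwins r hrI⟩
  have hWcard : K - T.card ≤ (((nation L M).image (regionIdx mr)).filter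
      (fun r => votesIn L M mr v' r false < votesIn L M mr v' r true)).card := by
    calc K - T.card = (((nation L M).image (regionIdx mr)) \ T).card :=
          (Finset.card_sdiff_of_subset hTsub).symm
      _ ≤ _ := Finset.card_le_card hgood
  omega
end
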